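/- Let W = W₁ ⊕ W₂ be a subspace of F_q^n. The number of k-dimensional subspaces Z of W with dim(Z ∩ W₁) = 0 equals q^{(dim W₁)·k} · [dim W₂ choose k]_q. -/

import Mathlib

open Module

/-- The `q`-factorial `a!_q = ∏_{k=1}^a (q^k - 1)/(q - 1)`. -/
noncomputable def qFact (q : ℚ) (a : ℕ) : ℚ := ∏ k ∈ Finset.range a, (q ^ (k + 1) - 1) / (q - 1)

/-- The Gaussian binomial coefficient `[a choose b]_q = a!_q / (b!_q (a-b)!_q)`
(and `0` when `b > a`). -/
noncomputable def qChoose (q : ℚ) (a b : ℕ) : ℚ :=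
  if b ≤ a then qFact q a / (qFact q b * qFact q (a - b)) else 0

section Aux

open Module Finset

section Alg

variable {x : ℚ} (hx : 2 ≤ x)

/-- numerator of the q-factorial -/
noncomputable def qNum (x : ℚ) (a : ℕ) : ℚ := ∏ j ∈ range a, (x ^ (j + 1) - 1)

include hx

lemma qNum_pos (a : ℕ) : 0 < qNum x a := by
  apply Finset.prod_pos
  intro j _
  have h1 : x ≤ x ^ (j+1) := le_self_pow₀ (by linarith) (by omega)
  linarith

lemma qFact_eq (a : ℕ) : qFact x a = qNum x a / (x - 1) ^ a := by
  rw [qFact, qNum, Finset.prod_div_distrib, Finset.prod_const, Finset.card_range]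

lemma prodP (k m : ℕ) (hkm : k ≤ m) :
    ∏ i ∈ range k, (x ^ m - x ^ i) =
      (∏ i ∈ range k, x ^ i) * (qNum x m / qNum x (m - k)) := by
  have h1 : ∀ i ∈ range k, x ^ m - x ^ i = x ^ i * (x ^ (m - i) - 1) := by
    intro i hi
    rw [mem_range] at hi
    rw [mul_sub, mul_one, ← pow_add]
    congr 2
    omega
  rw [Finset.prod_congr rfl h1, Finset.prod_mul_distrib]
  congr 1
  have h2 : ∏ i ∈ range k, (x ^ (m - i) - 1) = ∏ j ∈ range k, (x ^ ((m - k) + j + 1) - 1) := by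
    rw [← Finset.prod_range_reflect]
    apply Finset.prod_congr rfl
    intro j hj
    rw [mem_range] at hj
    congr 2
    omega
  rw [h2]
  have h3 : qNum x m = qNum x (m - k) * ∏ j ∈ range k, (x ^ ((m - k) + j + 1) - 1) := by
    have e := Finset.prod_range_add (fun j => (x ^ (j + 1) - 1)) (m - k) k
    rw [show m - k + k = m by omega] at e
    simpa [qNum] using e
  rw [h3, mul_div_assoc, mul_comm]
  exact (div_mul_cancel₀ _ (qNum_pos hx _).ne').symm

lemma qChoose_eq_prod (d k : ℕ) (hkd : k ≤ d) :
    qChoose x d k = (∏ i ∈ range k, (x ^ d - x ^ i)) / (∏ i ∈ range k, (x ^ k - x ^ i)) := by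
  rw [qChoose, if_pos hkd, prodP hx k d hkd, prodP hx k k le_rfl]
  rw [qFact_eq hx, qFact_eq hx, qFact_eq hx]
  have hN : ∀ a, qNum x a ≠ 0 := fun a => (qNum_pos hx a).ne'
  have hx1 : (x - 1) ≠ 0 := by linarith
  have hC : (∏ i ∈ range k, x ^ i) ≠ 0 := by
    apply Finset.prod_ne_zero_iff.mpr
    intro i _
    positivity
  simp only [Nat.sub_self]
  have h0 : qNum x 0 = 1 := by simp [qNum]
  rw [h0, div_one]
  have hpow : (x - 1) ^ d = (x - 1) ^ k * (x - 1) ^ (d - k) := by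
    rw [← pow_add]; congr 1; omega
  rw [hpow]
  have hNd := (qNum_pos hx d).ne'
  have hNk := (qNum_pos hx k).ne'
  have hNdk := (qNum_pos hx (d - k)).ne'
  field_simp

end Alg


section Counting

variable {F : Type} [Field F] [Fintype F]

lemma ncard_module (V : Type*) [AddCommGroup V] [Module F V] [Finite V] :
    Nat.card V = Fintype.card F ^ finrank F V := by
  have : Fintype V := Fintype.ofFinite V
  rw [Nat.card_eq_fintype_card]
  exact card_eq_pow_finrank (K := F)

lemma ncard_sigma_const {ι : Type*} [Finite ι] (f : ι → Type*) [∀ i, Finite (f i)] {c : ℕ}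
    (h : ∀ i, Nat.card (f i) = c) : Nat.card (Σ i, f i) = Nat.card ι * c := by
  have : Fintype ι := Fintype.ofFinite ι
  have : ∀ i, Fintype (f i) := fun i => Fintype.ofFinite _
  have h' : ∀ i, Fintype.card (f i) = c := fun i => by rw [← Nat.card_eq_fintype_card, h]
  rw [Nat.card_eq_fintype_card, Nat.card_eq_fintype_card, Fintype.card_sigma]
  simp [h']

lemma ncard_compl_submodule {V : Type*} [AddCommGroup V] [Module F V] [Finite V]
    (p : Submodule F V) :
    Nat.card {x : V // x ∉ p} = Fintype.card F ^ finrank F V - Fintype.card F ^ finrank F p := by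
  classical
  have : Fintype V := Fintype.ofFinite V
  rw [← ncard_module (F := F) V, ← ncard_module (F := F) p]
  rw [Nat.card_eq_fintype_card, Nat.card_eq_fintype_card, Nat.card_eq_fintype_card]
  exact Fintype.card_subtype_compl _

lemma card_li (V : Type*) [AddCommGroup V] [Module F V] [Finite V] (k : ℕ) :
    Nat.card {v : Fin k → V // LinearIndependent F v} =
      ∏ i ∈ Finset.range k, (Fintype.card F ^ finrank F V - Fintype.card F ^ i) := by
  induction k with
  | zero =>
    have : Unique {v : Fin 0 → V // LinearIndependent F v} :=
      ⟨⟨⟨fun i => i.elim0, linearIndependent_empty_type⟩⟩, by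
        rintro ⟨v, hv⟩; ext i; exact i.elim0⟩
    simp [Nat.card_unique]
  | succ k ih =>
    set T := {v : Fin (k + 1) → V // LinearIndependent F v}
    set S := {w : Fin k → V // LinearIndependent F w}
    have htail : ∀ v : T, LinearIndependent F (Fin.tail v.1) ∧
        v.1 0 ∉ Submodule.span F (Set.range (Fin.tail v.1)) := by
      intro v
      have := v.2
      rw [← Fin.cons_self_tail v.1] at this
      exact linearIndependent_fin_cons.mp this
    let f : T → S := fun v => ⟨Fin.tail v.1, (htail v).1⟩
    have e := Equiv.sigmaFiberEquiv f
    have hfib : ∀ w : S, Nat.card {v : T // f v = w} =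
        Fintype.card F ^ finrank F V - Fintype.card F ^ k := ?_
    · rw [← Nat.card_congr e, ncard_sigma_const _ hfib, ih, Finset.prod_range_succ]
    · intro w
      have efib : {v : T // f v = w} ≃ {x : V // x ∉ Submodule.span F (Set.range w.1)} :=
        { toFun := fun v => ⟨v.1.1 0, by
            have h2 := (htail v.1).2
            have h3 : Fin.tail v.1.1 = w.1 := congrArg Subtype.val v.2
            rwa [h3] at h2⟩
          invFun := fun x => ⟨⟨Fin.cons x.1 w.1, linearIndependent_fin_cons.mpr ⟨w.2, x.2⟩⟩,
            by apply Subtype.ext; simp [f, Fin.tail_cons]⟩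
          left_inv := fun v => by
            apply Subtype.ext; apply Subtype.ext
            show Fin.cons (v.1.1 0) w.1 = v.1.1
            have h3 : Fin.tail v.1.1 = w.1 := congrArg Subtype.val v.2
            conv_rhs => rw [← Fin.cons_self_tail v.1.1]
            rw [h3]
          right_inv := fun x => by apply Subtype.ext; simp }
      rw [Nat.card_congr efib, ncard_compl_submodule]
      congr 2
      rw [finrank_span_eq_card w.2, Fintype.card_fin]

instance {V : Type*} [AddCommGroup V] [Module F V] [Finite V] : Finite (Submodule F V) :=
  Finite.of_injective (fun Z => (Z : Set V)) SetLike.coe_injective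

lemma card_grassmannian_mul (V : Type*) [AddCommGroup V] [Module F V] [Finite V] (k : ℕ) :
    Nat.card {Z : Submodule F V // finrank F Z = k} *
        ∏ i ∈ Finset.range k, (Fintype.card F ^ k - Fintype.card F ^ i) =
      ∏ i ∈ Finset.range k, (Fintype.card F ^ finrank F V - Fintype.card F ^ i) := by
  have hfd : Module.Finite F V := Module.Finite.of_finite
  rw [← card_li V k]
  let f : {v : Fin k → V // LinearIndependent F v} → {Z : Submodule F V // finrank F Z = k} :=
    fun v => ⟨Submodule.span F (Set.range v.1), by
      rw [finrank_span_eq_card v.2, Fintype.card_fin]⟩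
  have e := Equiv.sigmaFiberEquiv f
  have hfib : ∀ Z : {Z : Submodule F V // finrank F Z = k},
      Nat.card {v : {v : Fin k → V // LinearIndependent F v} // f v = Z} =
        ∏ i ∈ Finset.range k, (Fintype.card F ^ k - Fintype.card F ^ i) := ?_
  · rw [← Nat.card_congr e, ncard_sigma_const _ hfib]
  intro Z
  have efib : {v : {v : Fin k → V // LinearIndependent F v} // f v = Z} ≃
      {w : Fin k → Z.1 // LinearIndependent F w} :=
    { toFun := fun v => ⟨fun i => ⟨v.1.1 i, by
        have h3 : Submodule.span F (Set.range v.1.1) = Z.1 := congrArg Subtype.val v.2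
        exact h3 ▸ Submodule.subset_span (Set.mem_range_self i)⟩, by
        apply LinearIndependent.of_comp Z.1.subtype
        exact v.1.2⟩
      invFun := fun w => ⟨⟨fun i => (w.1 i).1, w.2.map' Z.1.subtype (Submodule.ker_subtype _)⟩, by
        apply Subtype.ext
        show Submodule.span F (Set.range fun i => ((w.1 i : Z.1) : V)) = Z.1
        have htop : Submodule.span F (Set.range w.1) = ⊤ :=
          w.2.span_eq_top_of_card_eq_finrank' (by rw [Fintype.card_fin, Z.2])
        have : (Set.range fun i => ((w.1 i : Z.1) : V)) = Z.1.subtype '' Set.range w.1 := by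
          rw [← Set.range_comp]; rfl
        rw [this, ← Submodule.map_span, htop, Submodule.map_top, Submodule.range_subtype]⟩
      left_inv := fun v => by apply Subtype.ext; apply Subtype.ext; rfl
      right_inv := fun w => by apply Subtype.ext; ext i; rfl }
  rw [Nat.card_congr efib]
  have : finrank F Z.1 = k := Z.2
  rw [card_li (Z.1 : Submodule F V) k, this]

end Counting


section Graph

variable {F : Type} [Field F] [Fintype F]
variable {E F' : Type*} [AddCommGroup E] [Module F E] [AddCommGroup F'] [Module F F']

/-- The graph of a `LinearPMap` is linearly equivalent to its domain. -/
noncomputable def graphEquivDomain (f : E →ₗ.[F] F') : f.domain ≃ₗ[F] f.graph := by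
  apply LinearEquiv.ofBijective
    ({ toFun := fun x => ⟨(x.1, f x), f.mem_graph x⟩
       map_add' := by intro x y; apply Subtype.ext; simp [Prod.ext_iff, f.map_add]
       map_smul' := by intro c x; apply Subtype.ext; simp [Prod.ext_iff, f.map_smul] } :
      f.domain →ₗ[F] f.graph)
  constructor
  · intro x y hxy
    apply Subtype.ext
    exact congrArg (fun z : f.graph => (z : E × F').1) hxy
  · rintro ⟨⟨a, b⟩, hab⟩
    rw [LinearPMap.mem_graph_iff] at hab
    obtain ⟨y, hy1, hy2⟩ := hab
    exact ⟨y, Subtype.ext (Prod.ext hy1 hy2)⟩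

lemma finrank_graph (f : E →ₗ.[F] F') : finrank F f.graph = finrank F f.domain :=
  (LinearEquiv.finrank_eq (graphEquivDomain f)).symm

lemma graph_cond (f : E →ₗ.[F] F') :
    ∀ x ∈ f.graph, x.1 = 0 → x.2 = 0 := by
  intro x hx h1
  rw [LinearPMap.mem_graph_iff] at hx
  obtain ⟨y, hy1, hy2⟩ := hx
  have hy0 : y = 0 := by
    apply Subtype.ext
    rw [hy1, h1]
    rfl
  rw [← hy2, hy0]; exact f.map_zero

variable (F E F') in
/-- `LinearPMap` as a sigma type. -/
def pmapSigmaEquiv : (E →ₗ.[F] F') ≃ Σ U : Submodule F E, (U →ₗ[F] F') where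
  toFun f := ⟨f.domain, f.toFun⟩
  invFun x := ⟨x.1, x.2⟩
  left_inv f := rfl
  right_inv x := rfl

variable [Finite E] [Finite F']

instance (U : Submodule F E) : Finite (U →ₗ[F] F') :=
  Finite.of_injective (fun φ => (φ : U → F')) DFunLike.coe_injective

instance : Finite (E →ₗ.[F] F') :=
  Finite.of_equiv _ (pmapSigmaEquiv F E F').symm

lemma card_graph_cond (k : ℕ) :
    Nat.card {g : Submodule F (E × F') //
        finrank F g = k ∧ ∀ x ∈ g, x.1 = 0 → x.2 = 0} =
      Nat.card {U : Submodule F E // finrank F U = k} *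
        Fintype.card F ^ (finrank F F' * k) := by
  have : Module.Finite F E := Module.Finite.of_finite
  have : Module.Finite F F' := Module.Finite.of_finite
  have e1 : {g : Submodule F (E × F') // finrank F g = k ∧ ∀ x ∈ g, x.1 = 0 → x.2 = 0} ≃
      {f : E →ₗ.[F] F' // finrank F f.domain = k} :=
    { toFun := fun g => ⟨g.1.toLinearPMap, by
        have hgr := Submodule.toLinearPMap_graph_eq g.1 g.2.2
        have h2 := finrank_graph g.1.toLinearPMap
        rw [hgr] at h2
        rw [← h2]; exact g.2.1⟩
      invFun := fun f => ⟨f.1.graph, by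
        refine ⟨?_, graph_cond f.1⟩
        rw [finrank_graph]; exact f.2⟩
      left_inv := fun g => Subtype.ext (Submodule.toLinearPMap_graph_eq g.1 g.2.2)
      right_inv := fun f => Subtype.ext (LinearPMap.eq_of_eq_graph
        (Submodule.toLinearPMap_graph_eq f.1.graph (graph_cond f.1))) }
  have e2 : {f : E →ₗ.[F] F' // finrank F f.domain = k} ≃
      {x : Σ U : Submodule F E, (U →ₗ[F] F') // finrank F x.1 = k} :=
    (pmapSigmaEquiv F E F').subtypeEquiv (fun f => Iff.rfl)
  have e3 := Equiv.subtypeSigmaEquiv (fun U : Submodule F E => (U →ₗ[F] F'))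
    (fun U => finrank F U = k)
  rw [Nat.card_congr ((e1.trans e2).trans e3)]
  exact ncard_sigma_const _ (fun U => by
    rw [ncard_module (F := F), Module.finrank_linearMap, U.2, mul_comm])

end Graph


section Inter

variable {F : Type} [Field F] [Fintype F]

lemma card_inter_bot (V : Type*) [AddCommGroup V] [Module F V] [Finite V]
    (V₁ V₂ : Submodule F V) (hcompl : IsCompl V₂ V₁) (k : ℕ) :
    Nat.card {Z : Submodule F V // finrank F Z = k ∧ ∀ z ∈ Z, z ∈ V₁ → z = 0} =
      Nat.card {U : Submodule F V₂ // finrank F U = k} *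
        Fintype.card F ^ (finrank F V₁ * k) := by
  set σ : V ≃ₗ[F] (V₂ × V₁) := (Submodule.prodEquivOfIsCompl V₂ V₁ hcompl).symm with hσ
  have eD : {Z : Submodule F V // finrank F Z = k ∧ ∀ z ∈ Z, z ∈ V₁ → z = 0} ≃
      {g : Submodule F (V₂ × V₁) // finrank F g = k ∧ ∀ x ∈ g, x.1 = 0 → x.2 = 0} := by
    refine (Submodule.orderIsoMapComap σ).toEquiv.subtypeEquiv (fun Z => ?_)
    have hmap : (Submodule.orderIsoMapComap σ).toEquiv Z = Submodule.map (σ : V →ₗ[F] V₂ × V₁) Z := rfl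
    rw [hmap]
    constructor
    · rintro ⟨hrk, hcond⟩
      refine ⟨(LinearEquiv.finrank_map_eq σ Z).trans hrk, ?_⟩
      rintro x ⟨z, hz, rfl⟩ h1
      rw [hσ] at h1 ⊢
      rw [LinearEquiv.coe_coe, Submodule.prodEquivOfIsCompl_symm_apply_fst_eq_zero] at h1
      have := hcond z hz h1
      rw [this]
      simp
    · rintro ⟨hrk, hcond⟩
      refine ⟨(LinearEquiv.finrank_map_eq σ Z).symm.trans hrk, ?_⟩
      intro z hz h1
      have h1' : (σ z).1 = 0 := by
        rw [hσ, Submodule.prodEquivOfIsCompl_symm_apply_fst_eq_zero]; exact h1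
      have h2' : (σ z).2 = 0 := hcond (σ z) ⟨z, hz, rfl⟩ h1'
      have : σ z = 0 := Prod.ext h1' h2'
      simpa using congrArg σ.symm this
  rw [Nat.card_congr eD, card_graph_cond k]

lemma card_inter_bot_mul (V : Type*) [AddCommGroup V] [Module F V] [Finite V]
    (V₁ V₂ : Submodule F V) (hcompl : IsCompl V₂ V₁) (k : ℕ) :
    Nat.card {Z : Submodule F V // finrank F Z = k ∧ ∀ z ∈ Z, z ∈ V₁ → z = 0} *
        ∏ i ∈ Finset.range k, (Fintype.card F ^ k - Fintype.card F ^ i) =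
      (∏ i ∈ Finset.range k, (Fintype.card F ^ finrank F V₂ - Fintype.card F ^ i)) *
        Fintype.card F ^ (finrank F V₁ * k) := by
  rw [card_inter_bot V V₁ V₂ hcompl k, mul_right_comm,
    card_grassmannian_mul (F := F) (V₂ : Submodule F V) k]

end Inter


end Aux

set_option maxHeartbeats 2000000 in
set_option synthInstance.maxHeartbeats 2000000 in
/-- Let `W = W₁ ⊕ W₂` be a subspace of `F_q^n`.  The number of `k`-dimensional
subspaces `Z` of `W` with `dim (Z ∩ W₁) = 0` (i.e. `ℓ_q(Z,W₁) = k`) equals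
`q^(dim W₁ · k) · [dim W₂ choose k]_q`. -/
theorem stmt13 (q n k : ℕ) (F : Type) [Field F] [Fintype F] (hF : Fintype.card F = q)
    (W W₁ W₂ : Submodule F (Fin n → F))
    (hdisj : W₁ ⊓ W₂ = ⊥) (hsup : W₁ ⊔ W₂ = W) :
    (Nat.card {Z : Submodule F (Fin n → F) //
        Z ≤ W ∧ finrank F Z = k ∧ finrank F ↥(Z ⊓ W₁) = 0} : ℚ) =
      (q : ℚ) ^ (finrank F W₁ * k) * qChoose q (finrank F W₂) k := by
  subst hF
  set qn := Fintype.card F with hqn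
  have hW₁ : W₁ ≤ W := hsup ▸ le_sup_left
  have hW₂ : W₂ ≤ W := hsup ▸ le_sup_right
  -- Step A: rewrite the third condition
  have hprop : ∀ Z : Submodule F (Fin n → F),
      (Z ≤ W ∧ finrank F Z = k ∧ finrank F ↥(Z ⊓ W₁) = 0) ↔
        (Z ≤ W ∧ (finrank F Z = k ∧ ∀ x ∈ Z, x ∈ W₁ → x = 0)) := by
    intro Z
    rw [Submodule.finrank_eq_zero, Submodule.eq_bot_iff]
    simp only [Submodule.mem_inf, and_imp, and_assoc]
  rw [Nat.card_congr (Equiv.subtypeEquivRight hprop)]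
  -- Step B: move to submodules of W
  set V₁ : Submodule F ↥W := W₁.comap W.subtype with hV₁
  set V₂ : Submodule F ↥W := W₂.comap W.subtype with hV₂
  have eB : {Z' : Submodule F ↥W //
      finrank F Z' = k ∧ ∀ z ∈ Z', z ∈ V₁ → z = 0} ≃
      {Z : Submodule F (Fin n → F) //
        Z ≤ W ∧ (finrank F Z = k ∧ ∀ x ∈ Z, x ∈ W₁ → x = 0)} :=
    { toFun := fun Z' => ⟨Submodule.map W.subtype Z'.1,
        ⟨Submodule.map_subtype_le _ _, by
          rw [Submodule.finrank_map_subtype_eq]; exact Z'.2.1, by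
          rintro x ⟨z, hz, rfl⟩ hx1
          have := Z'.2.2 z hz hx1
          rw [this]; rfl⟩⟩
      invFun := fun Z => ⟨Submodule.comap W.subtype Z.1, by
        refine ⟨?_, ?_⟩
        · rw [← Submodule.finrank_map_subtype_eq, Submodule.map_comap_subtype,
            inf_eq_right.mpr Z.2.1]
          exact Z.2.2.1
        · intro z hz hz1
          have := Z.2.2.2 (z : Fin n → F) hz hz1
          exact Subtype.ext this⟩
      left_inv := fun Z' => Subtype.ext
        (Submodule.comap_map_eq_of_injective (Submodule.injective_subtype W) Z'.1)
      right_inv := fun Z => Subtype.ext (by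
        show Submodule.map W.subtype (Submodule.comap W.subtype Z.1) = Z.1
        rw [Submodule.map_comap_subtype, inf_eq_right.mpr Z.2.1]) }
  rw [← Nat.card_congr eB]
  -- Step C: IsCompl
  have hcompl : IsCompl V₂ V₁ := by
    constructor
    · rw [Submodule.disjoint_def]
      intro z h2 h1
      have : (z : Fin n → F) ∈ W₁ ⊓ W₂ := ⟨h1, h2⟩
      rw [hdisj, Submodule.mem_bot] at this
      exact Subtype.ext this
    · rw [codisjoint_iff, eq_top_iff]
      intro z _
      have hzW : (z : Fin n → F) ∈ W₁ ⊔ W₂ := by rw [hsup]; exact z.2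
      obtain ⟨a, ha, b, hb, hab⟩ := Submodule.mem_sup.mp hzW
      refine Submodule.mem_sup.mpr ⟨⟨b, hW₂ hb⟩, hb, ⟨a, hW₁ ha⟩, ha, ?_⟩
      apply Subtype.ext
      simpa [add_comm] using hab
  -- Step E: numerics
  have hd₁ : finrank F V₁ = finrank F W₁ :=
    LinearEquiv.finrank_eq (Submodule.comapSubtypeEquivOfLe hW₁)
  have hd₂ : finrank F V₂ = finrank F W₂ :=
    LinearEquiv.finrank_eq (Submodule.comapSubtypeEquivOfLe hW₂)
  set d₁ := finrank F W₁ with hd₁'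
  set d₂ := finrank F W₂ with hd₂'
  have hS := card_inter_bot_mul (↥W) V₁ V₂ hcompl k
  rw [hd₁, hd₂] at hS
  set N : ℕ := Nat.card {Z' : Submodule F ↥W //
      finrank F Z' = k ∧ ∀ z ∈ Z', z ∈ V₁ → z = 0} with hN
  have hq2 : 2 ≤ qn := Fintype.one_lt_card
  have hq2' : (2 : ℚ) ≤ (qn : ℚ) := by exact_mod_cast hq2
  have hq1' : (1 : ℚ) < (qn : ℚ) := by linarith
  by_cases hkd : k ≤ d₂
  · have hcast : ∀ m : ℕ, k ≤ m →
        ((∏ i ∈ Finset.range k, (qn ^ m - qn ^ i) : ℕ) : ℚ) =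
          ∏ i ∈ Finset.range k, ((qn : ℚ) ^ m - (qn : ℚ) ^ i) := by
      intro m hm
      rw [Nat.cast_prod]
      refine Finset.prod_congr rfl (fun i hi => ?_)
      rw [Finset.mem_range] at hi
      rw [Nat.cast_sub (Nat.pow_le_pow_right (by omega) (by omega))]
      push_cast; ring
    have hSQ : (N : ℚ) * ∏ i ∈ Finset.range k, ((qn : ℚ) ^ k - (qn : ℚ) ^ i) =
        (∏ i ∈ Finset.range k, ((qn : ℚ) ^ d₂ - (qn : ℚ) ^ i)) * (qn : ℚ) ^ (d₁ * k) := by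
      have := congrArg (Nat.cast : ℕ → ℚ) hS
      rwa [Nat.cast_mul, Nat.cast_mul, hcast k le_rfl, hcast d₂ hkd, Nat.cast_pow] at this
    have hPk : (0 : ℚ) < ∏ i ∈ Finset.range k, ((qn : ℚ) ^ k - (qn : ℚ) ^ i) := by
      apply Finset.prod_pos
      intro i hi
      rw [Finset.mem_range] at hi
      have := pow_lt_pow_right₀ hq1' hi
      linarith
    rw [qChoose_eq_prod hq2' d₂ k hkd, ← mul_div_assoc, eq_div_iff hPk.ne', hSQ]
    ring
  · rw [qChoose, if_neg hkd]
    have hR0 : ∏ i ∈ Finset.range k, (qn ^ d₂ - qn ^ i) = 0 :=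
      Finset.prod_eq_zero (i := d₂) (Finset.mem_range.mpr (by omega)) (Nat.sub_self _)
    rw [hR0, zero_mul] at hS
    have hPk : ∏ i ∈ Finset.range k, (qn ^ k - qn ^ i) ≠ 0 := by
      apply Finset.prod_ne_zero_iff.mpr
      intro i hi
      rw [Finset.mem_range] at hi
      have := Nat.pow_lt_pow_right hq2 hi
      omega
    have hN0 : N = 0 := by
      rcases Nat.mul_eq_zero.mp hS with h | h
      · exact h
      · exact absurd h hPk
    rw [hN0]
    norm_num
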